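/- arXiv:2207.07956 — 3 statements merged into one kernel-verified Lean document; each statement's English description precedes it below -/
import Mathlib

section
/- The map φ sending an orientation assignment θ : Λ → ZMod q with θ(v) = 0 for every boundary particle v of Λ to the edge labeling that assigns, to each edge of G_Δ with both endpoints in Λ taken in its canonical direction from u to v, the label θ(v) − θ(u) (mod q), and the label 0 to all other edges, is a bijection from {θ : Λ → ZMod q : θ = 0 on all boundary particles of Λ} onto the set of consistent labelings ξ : E(G_Δ) → ZMod q all of whose nonzero-labeled edges have both endpoints in Λ; moreover it preserves weights in the sense that the number of heterogeneous edges h(θ) equals the number of nonzero-labeled edges |E(φ(θ))|, so that γ^{−h(θ)} = γ^{−|E(φ(θ))|} for every γ > 0. -/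
open scoped Classical

/-- Vertices of the triangular lattice on the `m × m` torus. -/
abbrev Vtx (m : ℕ) := ZMod m × ZMod m

/-- The triangular lattice `G_Δ` on the `m × m` torus: `(x,y)` is adjacent to
`(x±1,y)`, `(x,y±1)` and `(x±1,y±1)`. -/
def triGraph (m : ℕ) : SimpleGraph (Vtx m) :=
  SimpleGraph.fromRel (fun u v => v - u = (1, 0) ∨ v - u = (0, 1) ∨ v - u = (1, 1))

/-- The number of lattice edges with exactly one endpoint in `S`: each such unordered
edge is counted exactly once, via the ordered pair whose first coordinate lies in `S`. -/
noncomputable def edgeBoundary {m : ℕ} [NeZero m] (S : Finset (Vtx m)) : ℕ :=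
  Finset.card (Finset.univ.filter
    (fun p : Vtx m × Vtx m => (triGraph m).Adj p.1 p.2 ∧ p.1 ∈ S ∧ p.2 ∉ S))

/-- The perimeter `p` of a region `S`, defined via `e = 2p + 6` where `e` is the number
of lattice edges with exactly one endpoint in `S`. -/
noncomputable def perimS {m : ℕ} [NeZero m] (S : Finset (Vtx m)) : ℝ :=
  ((edgeBoundary S : ℝ) - 6) / 2
/-- A connected hole-free region of `n` sites: it induces a connected subgraph and its
complement induces a connected subgraph. -/
def IsRegion {m : ℕ} [NeZero m] (n : ℕ) (Λ : Finset (Vtx m)) : Prop :=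
  Λ.card = n ∧
  ((triGraph m).induce (↑Λ : Set (Vtx m))).Connected ∧
  ((triGraph m).induce ((↑Λ : Set (Vtx m))ᶜ)).Connected
/-- An edge labeling of `G_Δ` with values in `ZMod q`, encoded as a function on ordered
pairs of vertices; the value on an edge traversed along its canonical direction is the
label, and the value in the opposite direction is its negative. -/
abbrev Lab (m q : ℕ) := Vtx m × Vtx m → ZMod q

/-- The labeling is skew: traversing an edge backwards contributes the negated label. -/
def Skew {m q : ℕ} (ξ : Lab m q) : Prop := ∀ u v : Vtx m, ξ (u, v) = -ξ (v, u)

/-- The labeling is supported on lattice edges. -/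
def SuppAdj {m q : ℕ} (ξ : Lab m q) : Prop :=
  ∀ u v : Vtx m, ¬ (triGraph m).Adj u v → ξ (u, v) = 0

/-- A labeling is consistent if the total flow along every closed walk of `G_Δ` is `0`. -/
def Consistent {m q : ℕ} (ξ : Lab m q) : Prop :=
  ∀ (v : Vtx m) (w : (triGraph m).Walk v v),
    (w.darts.map (fun d => ξ d.toProd)).sum = 0

/-- The support of a labeling: the ordered pairs carrying a nonzero label. -/
def suppSet {m q : ℕ} (ξ : Lab m q) : Set (Vtx m × Vtx m) := {p | ξ p ≠ 0}

/-- Twice the number `|E(ξ)|` of nonzero-labeled edges (ordered-pair count). -/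
noncomputable def suppCard {m q : ℕ} [NeZero m] (ξ : Lab m q) : ℕ :=
  Finset.card (Finset.univ.filter (fun p : Vtx m × Vtx m => ξ p ≠ 0))

/-- The number `|E(ξ)|` of nonzero-labeled edges of a labeling. -/
noncomputable def polyE {m q : ℕ} [NeZero m] (ξ : Lab m q) : ℝ := (suppCard ξ : ℝ) / 2

/-- `V(ξ)`: the number of vertices incident to a nonzero-labeled edge. -/
noncomputable def Vcard {m q : ℕ} [NeZero m] (ξ : Lab m q) : ℕ :=
  Finset.card (Finset.univ.filter (fun v : Vtx m =>
    ∃ p : Vtx m × Vtx m, ξ p ≠ 0 ∧ (v = p.1 ∨ v = p.2)))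

/-- Two edges (given as ordered pairs) are adjacent when they share a vertex. -/
def EdgeAdjP {m : ℕ} (p p' : Vtx m × Vtx m) : Prop :=
  p.1 = p'.1 ∨ p.1 = p'.2 ∨ p.2 = p'.1 ∨ p.2 = p'.2

/-- The set of nonzero-labeled edges of `ξ` is connected under the adjacency in which
two edges are adjacent when they share a vertex. -/
def SuppConnected {m q : ℕ} (ξ : Lab m q) : Prop :=
  ∀ p ∈ suppSet ξ, ∀ p' ∈ suppSet ξ,
    Relation.ReflTransGen
      (fun a b => a ∈ suppSet ξ ∧ b ∈ suppSet ξ ∧ EdgeAdjP a b) p p'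

/-- A polymer: a consistent labeling supported on lattice edges whose nonzero-labeled
edge set is nonempty and connected. -/
def IsPolymer {m q : ℕ} (ξ : Lab m q) : Prop :=
  Skew ξ ∧ SuppAdj ξ ∧ Consistent ξ ∧ (suppSet ξ).Nonempty ∧ SuppConnected ξ

/-- Two polymers are incompatible when some nonzero-labeled edge of one shares a vertex
with a nonzero-labeled edge of the other. -/
def Incompatible {m q : ℕ} (ξ ξ' : Lab m q) : Prop :=
  ∃ p ∈ suppSet ξ, ∃ p' ∈ suppSet ξ', EdgeAdjP p p'

/-- `v` is a boundary particle of `Λ`: it lies in `Λ` and is adjacent to a vertex not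
in `Λ`. -/
def BoundaryParticle {m : ℕ} [NeZero m] (Λ : Finset (Vtx m)) (v : Vtx m) : Prop :=
  v ∈ Λ ∧ ∃ u, (triGraph m).Adj v u ∧ u ∉ Λ

/-- The domain of `φ`: orientation assignments `θ : Λ → ZMod q` (extended by `0` off
`Λ`) that vanish on every boundary particle of `Λ`. -/
def DomSet {m : ℕ} [NeZero m] (q : ℕ) (Λ : Finset (Vtx m)) : Set (Vtx m → ZMod q) :=
  {θ | (∀ v ∉ Λ, θ v = 0) ∧ ∀ v : Vtx m, BoundaryParticle Λ v → θ v = 0}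

/-- The codomain of `φ`: consistent labelings all of whose nonzero-labeled edges have
both endpoints in `Λ`. -/
def CodSet {m : ℕ} [NeZero m] (q : ℕ) (Λ : Finset (Vtx m)) : Set (Lab m q) :=
  {ξ | Skew ξ ∧ SuppAdj ξ ∧ Consistent ξ ∧
    ∀ u v : Vtx m, ξ (u, v) ≠ 0 → u ∈ Λ ∧ v ∈ Λ}

/-- The map `φ`: it labels each edge of `G_Δ` with both endpoints in `Λ`, traversed
from `u` to `v`, by `θ(v) − θ(u) (mod q)`, and labels all other edges `0`. -/
noncomputable def labPhi {m : ℕ} [NeZero m] (q : ℕ) (Λ : Finset (Vtx m))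
    (θ : Vtx m → ZMod q) : Lab m q :=
  fun p => if (triGraph m).Adj p.1 p.2 ∧ p.1 ∈ Λ ∧ p.2 ∈ Λ then θ p.2 - θ p.1 else 0

/-- Twice the number `h(θ)` of heterogeneous edges of `θ` within `Λ`
(ordered-pair count). -/
noncomputable def hetZOrd {m q : ℕ} [NeZero m] (Λ : Finset (Vtx m))
    (θ : Vtx m → ZMod q) : ℕ :=
  Finset.card (Finset.univ.filter (fun p : Vtx m × Vtx m =>
    (triGraph m).Adj p.1 p.2 ∧ p.1 ∈ Λ ∧ p.2 ∈ Λ ∧ θ p.1 ≠ θ p.2))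

namespace PolymerAux

open SimpleGraph

variable {m q : ℕ}

/-- Flow of a labeling along a walk. -/
def flow (ξ : Lab m q) {u v : Vtx m} (w : (triGraph m).Walk u v) : ZMod q :=
  (w.darts.map (fun d => ξ d.toProd)).sum

lemma flow_append (ξ : Lab m q) {u v w' : Vtx m} (w1 : (triGraph m).Walk u v)
    (w2 : (triGraph m).Walk v w') : flow ξ (w1.append w2) = flow ξ w1 + flow ξ w2 := by
  simp [flow, SimpleGraph.Walk.darts_append]

lemma list_sum_map_neg {α : Type*} (l : List α) (f : α → ZMod q) :
    (l.map (fun a => -f a)).sum = -(l.map f).sum := by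
  induction l with
  | nil => simp
  | cons a t ih =>
    simp only [List.map_cons, List.sum_cons, ih, neg_add, add_comm]

lemma flow_reverse (ξ : Lab m q) (hs : Skew ξ) {u v : Vtx m}
    (w : (triGraph m).Walk u v) : flow ξ w.reverse = - flow ξ w := by
  unfold flow
  rw [SimpleGraph.Walk.darts_reverse, List.map_reverse, List.sum_reverse, List.map_map]
  have h : ((fun d : (triGraph m).Dart => ξ d.toProd) ∘ SimpleGraph.Dart.symm)
      = fun d : (triGraph m).Dart => -(ξ d.toProd) := by
    funext d
    rw [Function.comp_apply]
    have h2 : d.symm.toProd = (d.toProd.2, d.toProd.1) := rfl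
    rw [h2, hs d.toProd.2 d.toProd.1]
  rw [h, list_sum_map_neg]

lemma flow_eq (ξ : Lab m q) (hs : Skew ξ) (hc : Consistent ξ) {u v : Vtx m}
    (w1 w2 : (triGraph m).Walk u v) : flow ξ w1 = flow ξ w2 := by
  have h2 : flow ξ (w1.append w2.reverse) = 0 := hc u (w1.append w2.reverse)
  rw [flow_append, flow_reverse ξ hs] at h2
  have h3 : flow ξ w1 - flow ξ w2 = 0 := by rw [sub_eq_add_neg]; exact h2
  exact sub_eq_zero.mp h3

lemma flow_telescope (f : Vtx m → ZMod q) {u v : Vtx m} (w : (triGraph m).Walk u v) :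
    (w.darts.map (fun d => f d.toProd.2 - f d.toProd.1)).sum = f v - f u := by
  induction w with
  | nil => simp
  | cons h p ih =>
    rw [SimpleGraph.Walk.darts_cons, List.map_cons, List.sum_cons, ih]
    ring

lemma tri_preconnected (m : ℕ) [NeZero m] : (triGraph m).Preconnected := by
  by_cases hm : (1 : ZMod m) = 0
  · intro u v
    have hz : ∀ x : ZMod m, x = 0 := fun x => by
      calc x = x * 1 := by ring
        _ = 0 := by rw [hm, mul_zero]
    have huv : u = v := by
      obtain ⟨u1, u2⟩ := u; obtain ⟨v1, v2⟩ := v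
      rw [hz u1, hz u2, hz v1, hz v2]
    rw [huv]
  · have step : ∀ (v : Vtx m) (s : Vtx m), (s = (1, 0) ∨ s = (0, 1) ∨ s = (1, 1)) →
        (triGraph m).Adj v (v + s) := by
      intro v s hs
      rw [triGraph, SimpleGraph.fromRel_adj]
      constructor
      · intro h
        have hs0 : s = 0 := by
          have := congrArg (fun x => x - v) h
          simpa using this.symm
        rcases hs with h1 | h1 | h1 <;> subst h1
        · exact hm (congrArg Prod.fst hs0)
        · exact hm (congrArg Prod.snd hs0)
        · exact hm (congrArg Prod.fst hs0)
      · left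
        have hvs : v + s - v = s := by ring
        rw [hvs]
        tauto
    have rowa : ∀ a : ℕ, (triGraph m).Reachable (0, 0) ((a : ZMod m), (0 : ZMod m)) := by
      intro a
      induction a with
      | zero => simpa using SimpleGraph.Reachable.refl ((0, 0) : Vtx m)
      | succ k ih =>
        refine ih.trans (SimpleGraph.Adj.reachable ?_)
        have hcast : (((k + 1 : ℕ) : ZMod m), (0 : ZMod m))
            = ((k : ZMod m), (0 : ZMod m)) + (1, 0) := by
          push_cast
          simp [Prod.ext_iff]
        rw [hcast]
        exact step _ _ (by tauto)
    have key : ∀ a b : ℕ, (triGraph m).Reachable (0, 0) ((a : ZMod m), (b : ZMod m)) := by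
      intro a b
      induction b with
      | zero => simpa using rowa a
      | succ k ih =>
        refine ih.trans (SimpleGraph.Adj.reachable ?_)
        have hcast : (((a : ℕ) : ZMod m), ((k + 1 : ℕ) : ZMod m))
            = ((a : ZMod m), (k : ZMod m)) + (0, 1) := by
          push_cast
          simp [Prod.ext_iff]
        rw [hcast]
        exact step _ _ (by tauto)
    intro u v
    have hu : (triGraph m).Reachable (0, 0) u := by
      have := key u.1.val u.2.val
      simpa [ZMod.natCast_val, ZMod.cast_id] using this
    have hv : (triGraph m).Reachable (0, 0) v := by
      have := key v.1.val v.2.val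
      simpa [ZMod.natCast_val, ZMod.cast_id] using this
    exact hu.symm.trans hv

lemma flow_concat (ξ : Lab m q) {u v w' : Vtx m} (w : (triGraph m).Walk u v)
    (h : (triGraph m).Adj v w') :
    flow ξ (w.concat h) = flow ξ w + ξ (v, w') := by
  simp [flow, SimpleGraph.Walk.darts_concat]

lemma exists_zero_flow {Λ : Finset (Vtx m)} (ξ : Lab m q)
    (hξ : ∀ u v : Vtx m, ξ (u, v) ≠ 0 → u ∈ Λ ∧ v ∈ Λ)
    {a b : ((↑Λ : Set (Vtx m))ᶜ : Set (Vtx m))}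
    (w : ((triGraph m).induce ((↑Λ : Set (Vtx m))ᶜ)).Walk a b) :
    ∃ w' : (triGraph m).Walk a.1 b.1, flow ξ w' = 0 := by
  induction w with
  | nil => exact ⟨SimpleGraph.Walk.nil, rfl⟩
  | @cons x y z h p ih =>
    obtain ⟨w', hw'⟩ := ih
    have hadj : (triGraph m).Adj x.1 y.1 := h
    refine ⟨SimpleGraph.Walk.cons hadj w', ?_⟩
    have hz : ξ (x.1, y.1) = 0 := by
      by_contra hne
      exact x.2 (Finset.mem_coe.mpr (hξ _ _ hne).1)
    unfold flow
    rw [SimpleGraph.Walk.darts_cons, List.map_cons, List.sum_cons]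
    have : ξ ((SimpleGraph.Dart.mk (x.1, y.1) hadj).toProd) = 0 := hz
    rw [this, zero_add]
    exact hw'

end PolymerAux

/-- Lemma 3.2, the polymer-model bijection.
The map `φ` is a bijection from the orientation assignments on `Λ` vanishing on all
boundary particles of `Λ` onto the set of consistent labelings whose nonzero-labeled
edges have both endpoints in `Λ`; moreover it preserves weights: `h(θ) = |E(φ(θ))|`,
so `γ^{−h(θ)} = γ^{−|E(φ(θ))|}` for every `γ > 0`. -/
theorem polymer_bijection
    (q : ℕ) (hq : 2 ≤ q) (m n : ℕ) [NeZero m] (hmn : (n + 1) ^ 2 ≤ m ^ 2)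
    (Λ : Finset (Vtx m)) (hΛ : IsRegion n Λ) :
    Set.BijOn (labPhi q Λ) (DomSet q Λ) (CodSet q Λ) ∧
    ∀ θ ∈ DomSet q Λ,
      ((hetZOrd Λ θ : ℝ) / 2 = polyE (labPhi q Λ θ)) ∧
      ∀ gam : ℝ, 0 < gam →
        gam ^ (-((hetZOrd Λ θ : ℝ) / 2)) = gam ^ (-polyE (labPhi q Λ θ)) := by
  classical
  obtain ⟨hcard, hconnL, hconnC⟩ := hΛ
  have hcardV : Fintype.card (Vtx m) = m ^ 2 := by
    simp [ZMod.card, sq]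
  have hvex : ∃ v : Vtx m, v ∉ Λ := by
    by_contra h
    push_neg at h
    have huniv : Λ = Finset.univ := Finset.eq_univ_iff_forall.mpr h
    rw [huniv, Finset.card_univ, hcardV] at hcard
    nlinarith [hmn, hcard]
  obtain ⟨v₀, hv₀⟩ := hvex
  have hpre := PolymerAux.tri_preconnected m
  have factA : ∀ θ ∈ DomSet q Λ, ∀ u v : Vtx m, (triGraph m).Adj u v →
      labPhi q Λ θ (u, v) = θ v - θ u := by
    intro θ hθ u v hadj
    obtain ⟨hoff, hbd⟩ := hθ
    by_cases hmem : u ∈ Λ ∧ v ∈ Λ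
    · simp [labPhi, hadj, hmem.1, hmem.2]
    · have hu0 : θ u = 0 := by
        by_cases hu : u ∈ Λ
        · have hv : v ∉ Λ := fun hv => hmem ⟨hu, hv⟩
          exact hbd u ⟨hu, v, hadj, hv⟩
        · exact hoff u hu
      have hv0 : θ v = 0 := by
        by_cases hv : v ∈ Λ
        · have hu : u ∉ Λ := fun hu => hmem ⟨hu, hv⟩
          exact hbd v ⟨hv, u, hadj.symm, hu⟩
        · exact hoff v hv
      have hz : θ v - θ u = 0 := by rw [hu0, hv0, sub_zero]
      simp [labPhi, hmem, hz]
  have hmaps : ∀ θ ∈ DomSet q Λ, labPhi q Λ θ ∈ CodSet q Λ := by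
    intro θ hθ
    refine ⟨?_, ?_, ?_, ?_⟩
    · intro u v
      by_cases h : (triGraph m).Adj u v
      · rw [factA θ hθ u v h, factA θ hθ v u h.symm]; ring
      · have h' : ¬ (triGraph m).Adj v u := fun hh => h hh.symm
        simp [labPhi, h, h']
    · intro u v h
      simp [labPhi, h]
    · intro v w
      have hmapeq : (w.darts.map fun d => labPhi q Λ θ d.toProd)
          = w.darts.map fun d => θ d.toProd.2 - θ d.toProd.1 := by
        apply List.map_congr_left
        intro d _
        exact factA θ hθ d.toProd.1 d.toProd.2 d.adj
      rw [hmapeq, PolymerAux.flow_telescope, sub_self]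
    · intro u v h
      by_contra hc
      apply h
      simp only [labPhi]
      rw [if_neg (fun hcond => hc hcond.2)]
  have hinj : Set.InjOn (labPhi q Λ) (DomSet q Λ) := by
    intro θ hθ θ' hθ' heq
    funext v
    obtain ⟨w⟩ := hpre v₀ v
    have ht := PolymerAux.flow_telescope (fun x => θ x - θ' x) w
    have hz : (w.darts.map fun d => (fun x => θ x - θ' x) d.toProd.2
        - (fun x => θ x - θ' x) d.toProd.1).sum = 0 := by
      apply List.sum_eq_zero
      intro x hx
      obtain ⟨d, _, rfl⟩ := List.mem_map.mp hx
      have h1 := factA θ hθ d.toProd.1 d.toProd.2 d.adj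
      have h2 := factA θ' hθ' d.toProd.1 d.toProd.2 d.adj
      have h3 : labPhi q Λ θ (d.toProd.1, d.toProd.2)
          = labPhi q Λ θ' (d.toProd.1, d.toProd.2) := by rw [heq]
      have e1 : θ d.toProd.2 - θ d.toProd.1 = θ' d.toProd.2 - θ' d.toProd.1 := by
        rw [← h1, ← h2, h3]
      simp only []
      linear_combination e1
    have hfin : (fun x => θ x - θ' x) v - (fun x => θ x - θ' x) v₀ = 0 := by
      rw [← ht]; exact hz
    have h0 : θ v₀ = 0 := hθ.1 v₀ hv₀
    have h0' : θ' v₀ = 0 := hθ'.1 v₀ hv₀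
    simp only [h0, h0', sub_zero, sub_self] at hfin
    exact sub_eq_zero.mp hfin
  have hsurj : Set.SurjOn (labPhi q Λ) (DomSet q Λ) (CodSet q Λ) := by
    intro ξ hξ
    obtain ⟨hskew, hsupp, hcons, hmem⟩ := hξ
    set θ : Vtx m → ZMod q := fun v => PolymerAux.flow ξ ((hpre v₀ v).some) with hθdef
    have hflow : ∀ (v : Vtx m) (w : (triGraph m).Walk v₀ v),
        θ v = PolymerAux.flow ξ w :=
      fun v w => PolymerAux.flow_eq ξ hskew hcons _ w
    have hoff : ∀ v ∉ Λ, θ v = 0 := by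
      intro v hv
      have hv' : v ∈ (↑Λ : Set (Vtx m))ᶜ := by simpa using hv
      have hv₀' : v₀ ∈ (↑Λ : Set (Vtx m))ᶜ := by simpa using hv₀
      obtain ⟨wi⟩ := hconnC.preconnected ⟨v₀, hv₀'⟩ ⟨v, hv'⟩
      obtain ⟨w', hw'⟩ := PolymerAux.exists_zero_flow ξ hmem wi
      rw [hflow v w', hw']
    have hbd : ∀ v, BoundaryParticle Λ v → θ v = 0 := by
      rintro v ⟨hvL, u, hadj, hu⟩
      have hadj' : (triGraph m).Adj u v := hadj.symm
      have hw := hflow v (((hpre v₀ u).some).concat hadj')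
      have hξ0 : ξ (u, v) = 0 := by
        by_contra hne
        exact hu (hmem u v hne).1
      rw [hw, PolymerAux.flow_concat,
        show PolymerAux.flow ξ (hpre v₀ u).some = θ u from rfl, hoff u hu, hξ0, add_zero]
    refine ⟨θ, ⟨hoff, hbd⟩, ?_⟩
    funext p
    obtain ⟨u, v⟩ := p
    by_cases hadj : (triGraph m).Adj u v
    · have hval : θ v - θ u = ξ (u, v) := by
        have hw := hflow v (((hpre v₀ u).some).concat hadj)
        rw [hw, PolymerAux.flow_concat,
          show PolymerAux.flow ξ (hpre v₀ u).some = θ u from rfl]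
        ring
      by_cases hm2 : u ∈ Λ ∧ v ∈ Λ
      · simp only [labPhi]
        rw [if_pos ⟨hadj, hm2⟩]
        exact hval
      · have hz : ξ (u, v) = 0 := by
          by_contra hne; exact hm2 (hmem u v hne)
        simp only [labPhi]
        rw [if_neg (fun hc => hm2 hc.2), hz]
    · have hz : ξ (u, v) = 0 := hsupp u v hadj
      simp only [labPhi]
      rw [if_neg (fun hc => hadj hc.1), hz]
  have hcount : ∀ θ : Vtx m → ZMod q, hetZOrd Λ θ = suppCard (labPhi q Λ θ) := by
    intro θ
    unfold hetZOrd suppCard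
    congr 1
    apply Finset.filter_congr
    intro p _
    simp only [labPhi]
    constructor
    · rintro ⟨h1, h2, h3, h4⟩
      rw [if_pos ⟨h1, h2, h3⟩]
      intro he
      exact h4 (sub_eq_zero.mp he).symm
    · intro h
      by_cases hc : (triGraph m).Adj p.1 p.2 ∧ p.1 ∈ Λ ∧ p.2 ∈ Λ
      · refine ⟨hc.1, hc.2.1, hc.2.2, ?_⟩
        intro he
        rw [if_pos hc] at h
        exact h (by rw [he, sub_self])
      · rw [if_neg hc] at h
        exact absurd rfl h
  refine ⟨⟨fun θ hθ => hmaps θ hθ, hinj, hsurj⟩, ?_⟩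
  intro θ hθ
  have h1 : (hetZOrd Λ θ : ℝ) / 2 = polyE (labPhi q Λ θ) := by
    rw [polyE, hcount θ]
  exact ⟨h1, fun gam _ => by rw [h1]⟩
end

section
/- Let k ≥ 1 and ε ∈ (0,1). If y₁, …, y_k ∈ [0,1] satisfy Σ_{i=1}^k y_i = 1 and Σ_{i=1}^k √(y_i) ≤ 1/√(1−ε), then there exists an index i with y_i ≥ 1 − ε. -/
/-- a pigeonhole inequality for square roots, used in the proof of
Theorem 4.1. If `y₁, …, y_k ∈ [0,1]` satisfy `Σ y_i = 1` and
`Σ √(y_i) ≤ 1/√(1−ε)` for some `ε ∈ (0,1)`, then some `y_i ≥ 1 − ε`. -/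
theorem sqrt_sum_pigeonhole
    (k : ℕ) (hk : 1 ≤ k) (ε : ℝ) (hε0 : 0 < ε) (hε1 : ε < 1)
    (y : Fin k → ℝ) (hy0 : ∀ i, 0 ≤ y i) (hy1 : ∀ i, y i ≤ 1)
    (hsum : ∑ i, y i = 1)
    (hsqrt : ∑ i, Real.sqrt (y i) ≤ 1 / Real.sqrt (1 - ε)) :
    ∃ i, 1 - ε ≤ y i := by
  haveI : Nonempty (Fin k) := Fin.pos_iff_nonempty.mp hk
  obtain ⟨i, -, hi⟩ := Finset.exists_max_image Finset.univ y Finset.univ_nonempty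
  refine ⟨i, ?_⟩
  set M := y i with hM
  have hMpos : 0 < M := by
    by_contra h
    push_neg at h
    have : ∀ j, y j = 0 := fun j =>
      le_antisymm (le_trans (hi j (Finset.mem_univ j)) h) (hy0 j)
    simp [this] at hsum
  have hsM : 0 < Real.sqrt M := Real.sqrt_pos.mpr hMpos
  have key : ∀ j, y j / Real.sqrt M ≤ Real.sqrt (y j) := by
    intro j
    rw [div_le_iff₀ hsM]
    calc y j = Real.sqrt (y j) * Real.sqrt (y j) := (Real.mul_self_sqrt (hy0 j)).symm
      _ ≤ Real.sqrt (y j) * Real.sqrt M := by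
          exact mul_le_mul_of_nonneg_left
            (Real.sqrt_le_sqrt (hi j (Finset.mem_univ j))) (Real.sqrt_nonneg _)
  have h1 : 1 / Real.sqrt M ≤ 1 / Real.sqrt (1 - ε) := by
    calc 1 / Real.sqrt M = (∑ j, y j) / Real.sqrt M := by rw [hsum]
      _ = ∑ j, y j / Real.sqrt M := by rw [Finset.sum_div]
      _ ≤ ∑ j, Real.sqrt (y j) := Finset.sum_le_sum fun j _ => key j
      _ ≤ _ := hsqrt
  have hε : 0 < Real.sqrt (1 - ε) := Real.sqrt_pos.mpr (by linarith)
  have h2 : Real.sqrt (1 - ε) ≤ Real.sqrt M := by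
    rw [div_le_div_iff₀ hsM hε] at h1
    linarith
  nlinarith [Real.sq_sqrt (le_of_lt hMpos), Real.sq_sqrt (show (0:ℝ) ≤ 1 - ε by linarith),
    Real.sqrt_nonneg M, Real.sqrt_nonneg (1 - ε)]
end

section
/- Let q ≥ 2 be an integer and let ε ∈ (0, 1/q). Then for every δ ∈ (0,1) with |δ − 1/q| ≥ ε, one has (q(1−δ)/(q−1))^{1−δ} · (qδ)^{δ} ≥ (1 − εq/(q−1))^{(q−1)/q − ε} · (1 + εq)^{1/q + ε}; that is, over the set {δ ∈ (0,1) : |δ − 1/q| ≥ ε}, the function δ ↦ (q(1−δ)/(q−1))^{1−δ}(qδ)^{δ} is minimized at δ = 1/q + ε. -/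
open Real Set

private noncomputable def pf (Q x : ℝ) : ℝ :=
  x * Real.log x + (1 - x) * Real.log (1 - x) + x * Real.log Q
    + (1 - x) * Real.log (Q / (Q - 1))

private lemma pf_hasDeriv {Q x : ℝ} (hQ : 2 ≤ Q) (hx0 : 0 < x) (hx1 : x < 1) :
    HasDerivAt (pf Q) (Real.log x - Real.log (1 - x) + Real.log (Q - 1)) x := by
  have hQ1 : (0:ℝ) < Q - 1 := by linarith
  have hQ0 : (0:ℝ) < Q := by linarith
  have h1 : HasDerivAt (fun x : ℝ => x * Real.log x) (Real.log x + 1) x :=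
    Real.hasDerivAt_mul_log hx0.ne'
  have h2 : HasDerivAt (fun x : ℝ => (1 - x) * Real.log (1 - x))
      (-(Real.log (1 - x) + 1)) x := by
    have h := (Real.hasDerivAt_mul_log (x := 1 - x) (by linarith)).comp x
      ((hasDerivAt_const x (1:ℝ)).sub (hasDerivAt_id x))
    simpa [Function.comp_def] using h.congr_deriv (by ring)
  have h3 : HasDerivAt (fun x : ℝ => x * Real.log Q) (Real.log Q) x := by
    simpa using (hasDerivAt_id x).mul_const (Real.log Q)
  have h4 : HasDerivAt (fun x : ℝ => (1 - x) * Real.log (Q / (Q - 1)))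
      (-Real.log (Q / (Q - 1))) x := by
    have h := ((hasDerivAt_const x (1:ℝ)).sub (hasDerivAt_id x)).mul_const
      (Real.log (Q / (Q - 1)))
    simpa using h.congr_deriv (by ring)
  have h := ((h1.add h2).add h3).add h4
  have : HasDerivAt (pf Q)
      ((Real.log x + 1 + -(Real.log (1 - x) + 1)) + Real.log Q + -Real.log (Q / (Q - 1))) x := h
  convert this using 1
  rw [Real.log_div hQ0.ne' hQ1.ne']
  ring

private lemma pf_exp {Q x : ℝ} (hQ : 2 ≤ Q) (hx0 : 0 < x) (hx1 : x < 1) :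
    (Q * (1 - x) / (Q - 1)) ^ (1 - x) * (Q * x) ^ x = Real.exp (pf Q x) := by
  have hQ1 : (0:ℝ) < Q - 1 := by linarith
  have hQ0 : (0:ℝ) < Q := by linarith
  have h1x : (0:ℝ) < 1 - x := by linarith
  have hb1 : 0 < Q * (1 - x) / (Q - 1) := by positivity
  have hb2 : 0 < Q * x := by positivity
  rw [Real.rpow_def_of_pos hb1, Real.rpow_def_of_pos hb2, ← Real.exp_add]
  congr 1
  have e1 : Q * (1 - x) / (Q - 1) = (1 - x) * (Q / (Q - 1)) := by ring
  rw [e1, Real.log_mul h1x.ne' (by positivity), Real.log_mul hQ0.ne' hx0.ne']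
  unfold pf
  ring

private lemma pf_mono {Q : ℝ} (hQ : 2 ≤ Q) : MonotoneOn (pf Q) (Ico (1/Q) 1) := by
  have hQ0 : (0:ℝ) < Q := by linarith
  have hmem : ∀ x ∈ Ico (1/Q) 1, 0 < x ∧ x < 1 := by
    intro x hx
    exact ⟨lt_of_lt_of_le (by positivity) hx.1, hx.2⟩
  apply monotoneOn_of_deriv_nonneg (convex_Ico _ _)
  · intro x hx
    obtain ⟨h0, h1⟩ := hmem x hx
    exact (pf_hasDeriv hQ h0 h1).differentiableAt.continuousAt.continuousWithinAt
  · intro x hx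
    rw [interior_Ico] at hx
    obtain ⟨h0, h1⟩ := hmem x (Ioo_subset_Ico_self hx)
    exact (pf_hasDeriv hQ h0 h1).differentiableAt.differentiableWithinAt
  · intro x hx
    rw [interior_Ico] at hx
    obtain ⟨h0, h1⟩ := hmem x (Ioo_subset_Ico_self hx)
    rw [(pf_hasDeriv hQ h0 h1).deriv]
    have hxQ : 1 - x ≤ x * (Q - 1) := by
      have : 1 ≤ x * Q := by
        have h := hx.1
        rw [div_lt_iff₀ hQ0] at h
        linarith
      nlinarith
    have := Real.log_le_log (by linarith) hxQ
    rw [Real.log_mul h0.ne' (by linarith : Q - 1 ≠ 0)] at this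
    linarith

private lemma pf_anti {Q : ℝ} (hQ : 2 ≤ Q) : AntitoneOn (pf Q) (Ioc 0 (1/Q)) := by
  have hQ0 : (0:ℝ) < Q := by linarith
  have hmem : ∀ x ∈ Ioc (0:ℝ) (1/Q), 0 < x ∧ x < 1 := by
    intro x hx
    refine ⟨hx.1, lt_of_le_of_lt hx.2 ?_⟩
    rw [div_lt_one hQ0]; linarith
  apply antitoneOn_of_deriv_nonpos (convex_Ioc _ _)
  · intro x hx
    obtain ⟨h0, h1⟩ := hmem x hx
    exact (pf_hasDeriv hQ h0 h1).differentiableAt.continuousAt.continuousWithinAt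
  · intro x hx
    rw [interior_Ioc] at hx
    obtain ⟨h0, h1⟩ := hmem x (Ioo_subset_Ioc_self hx)
    exact (pf_hasDeriv hQ h0 h1).differentiableAt.differentiableWithinAt
  · intro x hx
    rw [interior_Ioc] at hx
    obtain ⟨h0, h1⟩ := hmem x (Ioo_subset_Ioc_self hx)
    rw [(pf_hasDeriv hQ h0 h1).deriv]
    have hxQ : x * (Q - 1) ≤ 1 - x := by
      have : x * Q ≤ 1 := by
        have h := hx.2
        rw [lt_div_iff₀ hQ0] at h
        linarith
      nlinarith
    have := Real.log_le_log (by nlinarith) hxQ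
    rw [Real.log_mul h0.ne' (by linarith : Q - 1 ≠ 0)] at this
    linarith

private lemma pf_symm {Q ε : ℝ} (hQ : 2 ≤ Q) (hε0 : 0 < ε) (hε1 : ε < 1/Q) :
    pf Q (1/Q + ε) ≤ pf Q (1/Q - ε) := by
  have hQ0 : (0:ℝ) < Q := by linarith
  set a : ℝ := 1/Q with ha
  have haQ : a * Q = 1 := one_div_mul_cancel hQ0.ne'
  have ha0 : 0 < a := by positivity
  have ha2 : a ≤ 1/2 := by
    rw [ha, div_le_div_iff₀ hQ0 (by norm_num)]; linarith
  set φ : ℝ → ℝ := fun t => pf Q (a - t) - pf Q (a + t) with hφ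
  -- derivative of φ at t ∈ [0, ε]
  have hD : ∀ t, 0 ≤ t → t ≤ ε → HasDerivAt φ
      (-(Real.log (a - t) - Real.log (1 - (a - t)) + Real.log (Q - 1))
        - (Real.log (a + t) - Real.log (1 - (a + t)) + Real.log (Q - 1))) t := by
    intro t ht0 ht1
    have h1 : 0 < a - t := by linarith
    have h2 : a - t < 1 := by linarith
    have h3 : 0 < a + t := by linarith
    have h4 : a + t < 1 := by linarith
    have hL : HasDerivAt (fun t : ℝ => pf Q (a - t))
        (-(Real.log (a - t) - Real.log (1 - (a - t)) + Real.log (Q - 1))) t := by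
      have h := (pf_hasDeriv hQ h1 h2).comp t
        ((hasDerivAt_const t a).sub (hasDerivAt_id t))
      simpa [Function.comp_def] using h.congr_deriv (by ring)
    have hR : HasDerivAt (fun t : ℝ => pf Q (a + t))
        (Real.log (a + t) - Real.log (1 - (a + t)) + Real.log (Q - 1)) t := by
      have h := (pf_hasDeriv hQ h3 h4).comp t
        ((hasDerivAt_const t a).add (hasDerivAt_id t))
      simpa [Function.comp_def] using h.congr_deriv (by ring)
    exact hL.sub hR
  have hmono : MonotoneOn φ (Icc 0 ε) := by
    apply monotoneOn_of_deriv_nonneg (convex_Icc _ _)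
    · intro t ht
      exact (hD t ht.1 ht.2).differentiableAt.continuousAt.continuousWithinAt
    · intro t ht
      rw [interior_Icc] at ht
      exact (hD t ht.1.le ht.2.le).differentiableAt.differentiableWithinAt
    · intro t ht
      rw [interior_Icc] at ht
      obtain ⟨ht0, ht1⟩ := ht
      rw [(hD t ht0.le ht1.le).deriv]
      have h1 : 0 < a - t := by linarith
      have h3 : 0 < a + t := by linarith
      have h4 : a + t < 1 := by linarith
      have hQ1 : (0:ℝ) < Q - 1 := by linarith
      have h2' : (0:ℝ) < 1 - (a - t) := by linarith
      have h4' : (0:ℝ) < 1 - (a + t) := by linarith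
      have h5 : a * (Q - 1) = 1 - a := by nlinarith [haQ]
      have h6 : t * t ≤ t * t * ((Q - 1) * (Q - 1)) := by
        nlinarith [mul_nonneg (mul_nonneg ht0.le ht0.le)
          (show (0:ℝ) ≤ (Q-1)*(Q-1)-1 by nlinarith)]
      have h7 : (a * (Q - 1)) * (a * (Q - 1)) = (1 - a) * (1 - a) := by rw [h5]
      have key : (a - t) * (a + t) * ((Q - 1) * (Q - 1)) ≤ (1 - (a - t)) * (1 - (a + t)) := by
        nlinarith [h6, h7]
      have hlog := Real.log_le_log (by positivity) key
      rw [Real.log_mul (mul_pos h1 h3).ne' (mul_pos hQ1 hQ1).ne',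
        Real.log_mul h1.ne' h3.ne', Real.log_mul hQ1.ne' hQ1.ne',
        Real.log_mul h2'.ne' h4'.ne'] at hlog
      linarith [hlog]
  have h0 : φ 0 = 0 := by simp [hφ]
  have := hmono (left_mem_Icc.mpr hε0.le) (right_mem_Icc.mpr hε0.le) hε0.le
  rw [h0] at this
  simpa [hφ] using this


/-- analytic minimization from the proof of the connected
non-alignment lemma. For an integer `q ≥ 2` and `ε ∈ (0, 1/q)`, over all
`δ ∈ (0,1)` with `|δ − 1/q| ≥ ε`, the function
`δ ↦ (q(1−δ)/(q−1))^{1−δ}(qδ)^δ` is minimized at `δ = 1/q + ε`; that is,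
`(q(1−δ)/(q−1))^{1−δ}(qδ)^δ ≥ (1 − εq/(q−1))^{(q−1)/q − ε}(1 + εq)^{1/q + ε}`. -/
theorem potts_entropy_minimization
    (q : ℕ) (hq : 2 ≤ q) (ε : ℝ) (hε0 : 0 < ε) (hε1 : ε < 1 / (q : ℝ))
    (δ : ℝ) (hδ0 : 0 < δ) (hδ1 : δ < 1) (hfar : ε ≤ |δ - 1 / (q : ℝ)|) :
    (1 - ε * q / ((q : ℝ) - 1)) ^ (((q : ℝ) - 1) / q - ε) *
        (1 + ε * (q : ℝ)) ^ (1 / (q : ℝ) + ε)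
      ≤ ((q : ℝ) * (1 - δ) / ((q : ℝ) - 1)) ^ (1 - δ) * ((q : ℝ) * δ) ^ δ := by
  set Q : ℝ := (q : ℝ) with hQdef
  have hQ2 : (2:ℝ) ≤ Q := by rw [hQdef]; exact_mod_cast hq
  have hQ0 : (0:ℝ) < Q := by linarith
  have hQ1 : (0:ℝ) < Q - 1 := by linarith
  have ha0 : (0:ℝ) < 1/Q := by positivity
  have ha2 : 1/Q ≤ 1/2 := by
    rw [div_le_div_iff₀ hQ0 (by norm_num)]; linarith
  -- the left-hand side is the function evaluated at δ₀ = 1/Q + ε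
  have hδ00 : (0:ℝ) < 1/Q + ε := by linarith
  have hδ01 : 1/Q + ε < 1 := by linarith
  have e1 : (1 - ε * Q / (Q - 1)) = Q * (1 - (1/Q + ε)) / (Q - 1) := by
    field_simp; ring
  have e2 : (Q - 1) / Q - ε = 1 - (1/Q + ε) := by
    field_simp; ring
  have e3 : 1 + ε * Q = Q * (1/Q + ε) := by
    field_simp
  rw [e1, e2, e3, pf_exp hQ2 hδ00 hδ01, pf_exp hQ2 hδ0 hδ1, Real.exp_le_exp]
  rcases le_abs.mp hfar with h | h
  · -- δ ≥ 1/Q + ε : use monotonicity on [1/Q, 1)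
    exact pf_mono hQ2 ⟨by linarith, hδ01⟩ ⟨by linarith, hδ1⟩ (by linarith)
  · -- δ ≤ 1/Q - ε : use antitonicity on (0, 1/Q] and the symmetry estimate
    have h1 : pf Q (1/Q + ε) ≤ pf Q (1/Q - ε) := pf_symm hQ2 hε0 hε1
    have h2 : pf Q (1/Q - ε) ≤ pf Q δ :=
      pf_anti hQ2 ⟨hδ0, by linarith⟩ ⟨by linarith, by linarith⟩ (by linarith)
    linarith
end
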